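/- Let q = 2^n, let α, α' ∈ F_q* be distinct, and set γ = α'² + αα'. For every x ∈ F_q, the element z = x(x+α)(x+α')(x+α+α') satisfies Tr_{F_q/F_2}(z/γ²) = 0. -/

import Mathlib

/-- Frobenius as an algebra equivalence over `ZMod 2`, and invariance of trace. -/
lemma trace_sq (F : Type*) [Field F] [Fintype F] [Algebra (ZMod 2) F]
    [CharP F 2] (w : F) :
    Algebra.trace (ZMod 2) F (w ^ 2) = Algebra.trace (ZMod 2) F w := by
  have : Fact (Nat.Prime 2) := ⟨by norm_num⟩
  let e : F ≃ₐ[ZMod 2] F :=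
    AlgEquiv.ofRingEquiv (f := frobeniusEquiv F 2) (by
      intro a
      simp only [frobeniusEquiv_apply, frobenius_def]
      rw [← map_pow, ZMod.pow_card])
  have := Algebra.trace_eq_of_algEquiv e w
  simpa [e, AlgEquiv.ofRingEquiv, frobenius_def] using this

/-- For distinct `α, α' ∈ 𝔽_q*` and `γ = α'² + αα'`, every value
`z = x(x+α)(x+α')(x+α+α')` satisfies `Tr_{𝔽_q/𝔽₂}(z/γ²) = 0`. -/
theorem stmt11 (n : ℕ) (F : Type*) [Field F] [Fintype F] [Algebra (ZMod 2) F]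
    (hF : Fintype.card F = 2 ^ n)
    (α α' : F) (hα : α ≠ 0) (hα' : α' ≠ 0) (hne : α ≠ α') :
    ∀ x : F,
      Algebra.trace (ZMod 2) F
        (x * (x + α) * (x + α') * (x + α + α') / (α' ^ 2 + α * α') ^ 2) = 0 := by
  haveI : CharP F 2 := charP_of_injective_algebraMap (algebraMap (ZMod 2) F).injective 2
  intro x
  have h2 : (2 : F) = 0 := by exact_mod_cast CharP.cast_eq_zero F 2
  set γ : F := α' ^ 2 + α * α' with hγdef
  have hγ : γ ≠ 0 := by
    have h1 : α' + α ≠ 0 := by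
      intro h
      apply hne
      linear_combination h - α' * h2
    have : γ = α' * (α' + α) := by ring
    rw [this]
    exact mul_ne_zero hα' h1
  set u : F := x * (x + α) with hu
  have key0 : x * (x + α) * (x + α') * (x + α + α') = u ^ 2 + γ * u := by
    linear_combination (α' * x ^ 3 + α * α' * x ^ 2) * h2
  have key : x * (x + α) * (x + α') * (x + α + α') / γ ^ 2
      = (u / γ) ^ 2 + u / γ := by
    rw [key0]; field_simp
  rw [key, map_add, trace_sq]
  exact CharTwo.add_self_eq_zero _
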